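/- A full-rank state ρ commuting with a non-degenerate Hamiltonian H is completely passive (ρ^⊗k is passive under the k-fold sum Hamiltonian for every k ≥ 1) if and only if ρ is a Gibbs state: p_i = e^{−βε_i}/Z for some β ≥ 0, where Z = ∑_j e^{−βε_j}. -/

import Mathlib

open Finset

lemma sum_ite_fin (m n : ℕ) (x y : ℝ) :
    ∑ t : Fin (m + n), (if (t : ℕ) < m then x else y) = m * x + n * y := by
  rw [Fin.sum_univ_eq_sum_range (fun i => if i < m then x else y)]
  induction n with
  | zero =>
      simp only [Nat.add_zero, Nat.cast_zero, zero_mul, add_zero]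
      rw [Finset.sum_congr rfl (fun i hi => if_pos (Finset.mem_range.mp hi))]
      simp
  | succ n ih =>
      rw [show m + (n+1) = (m+n) + 1 by omega, Finset.sum_range_succ, ih,
        if_neg (by omega)]
      push_cast; ring

lemma ratio_aux {A B S T : ℝ} (hA : 0 < A) (hB : 0 < B) (hS : 0 ≤ S)
    (H : ∀ m n : ℕ, 1 ≤ m + n → (n:ℝ)*B ≤ m*A → (n:ℝ)*T ≤ m*S) : T*A ≤ S*B := by
  by_contra hc
  push_neg at hc
  have hT : 0 < T := by nlinarith
  obtain ⟨n, hn⟩ := exists_nat_gt (S*A/(T*A - S*B))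
  have hden : 0 < T*A - S*B := by linarith
  have hn' : S*A < n * (T*A - S*B) := by
    rw [div_lt_iff₀ hden] at hn; linarith
  have hnpos : 0 < n := by
    rcases Nat.eq_zero_or_pos n with h|h
    · exfalso; rw [h] at hn'; push_cast at hn'; nlinarith [mul_nonneg hS hA.le]
    · exact h
  set m := ⌈(n:ℝ)*B/A⌉₊ with hm
  have h1 : (n:ℝ)*B ≤ m*A := by
    have := Nat.le_ceil ((n:ℝ)*B/A)
    rw [div_le_iff₀ hA] at this
    exact this
  have h2 : (m:ℝ) < (n:ℝ)*B/A + 1 := by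
    apply Nat.ceil_lt_add_one
    positivity
  have h3 : (m:ℝ)*A < (n:ℝ)*B + A := by
    have := mul_lt_mul_of_pos_right h2 hA
    rw [add_mul, div_mul_cancel₀ _ hA.ne', one_mul] at this
    exact this
  have h4 : (n:ℝ)*T ≤ m*S := H m n (by omega) h1
  nlinarith [mul_le_mul_of_nonneg_right h3.le hS, mul_le_mul_of_nonneg_right h4 hA.le]

/-- A full-rank diagonal state with populations `p`, commuting with the non-degenerate
Hamiltonian with eigenvalues `ε`, is completely passive (every `k`-fold tensor power is
passive for the `k`-fold sum Hamiltonian, expressed via multi-indices) if and only if it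
is a Gibbs state `p i = e^{−β ε i}/Z` for some `β ≥ 0`. -/
theorem stmt9 {d : ℕ} (ε p : Fin d → ℝ) (hε : StrictMono ε)
    (hp : ∀ i, 0 < p i) (hp1 : ∑ i, p i = 1) :
    (∀ k : ℕ, 1 ≤ k → ∀ f g : Fin k → Fin d,
        ∑ t, ε (f t) ≤ ∑ t, ε (g t) → ∏ t, p (g t) ≤ ∏ t, p (f t)) ↔
    (∃ β : ℝ, 0 ≤ β ∧ ∀ i, p i = Real.exp (-β * ε i) / ∑ j, Real.exp (-β * ε j)) := by
  have hd : 0 < d := by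
    rcases Nat.eq_zero_or_pos d with h|h
    · exfalso; subst h; simp at hp1
    · exact h
  constructor
  · -- forward direction
    intro P
    set s : Fin d → ℝ := fun i => -Real.log (p i) with hs
    -- key two-index consequence of passivity
    have key : ∀ a e b c : Fin d, ∀ m n : ℕ, 1 ≤ m + n →
        (m:ℝ)*ε a + n*ε e ≤ m*ε b + n*ε c →
        (m:ℝ)*s a + n*s e ≤ m*s b + n*s c := by
      intro a e b c m n hk h
      set f : Fin (m+n) → Fin d := fun t => if (t:ℕ) < m then a else e with hf
      set g : Fin (m+n) → Fin d := fun t => if (t:ℕ) < m then b else c with hg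
      have hsumf : ∑ t, ε (f t) = m * ε a + n * ε e := by
        rw [show (fun t : Fin (m+n) => ε (f t)) = fun t : Fin (m+n) => if (t:ℕ) < m then ε a else ε e from
          funext fun t => by simp only [hf]; split <;> rfl]
        exact sum_ite_fin m n _ _
      have hsumg : ∑ t, ε (g t) = m * ε b + n * ε c := by
        rw [show (fun t : Fin (m+n) => ε (g t)) = fun t : Fin (m+n) => if (t:ℕ) < m then ε b else ε c from
          funext fun t => by simp only [hg]; split <;> rfl]
        exact sum_ite_fin m n _ _
      have hprod := P (m+n) hk f g (by rw [hsumf, hsumg]; exact h)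
      have hpf : 0 < ∏ t, p (f t) := Finset.prod_pos fun t _ => hp _
      have hpg : 0 < ∏ t, p (g t) := Finset.prod_pos fun t _ => hp _
      have hlog := Real.log_le_log hpg hprod
      rw [Real.log_prod (fun t _ => (hp (f t)).ne'),
        Real.log_prod (fun t _ => (hp (g t)).ne')] at hlog
      have hlf : ∑ t, Real.log (p (f t)) = m * Real.log (p a) + n * Real.log (p e) := by
        rw [show (fun t : Fin (m+n) => Real.log (p (f t)))
            = fun t : Fin (m+n) => if (t:ℕ) < m then Real.log (p a) else Real.log (p e) from
          funext fun t => by simp only [hf]; split <;> rfl]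
        exact sum_ite_fin m n _ _
      have hlg : ∑ t, Real.log (p (g t)) = m * Real.log (p b) + n * Real.log (p c) := by
        rw [show (fun t : Fin (m+n) => Real.log (p (g t)))
            = fun t : Fin (m+n) => if (t:ℕ) < m then Real.log (p b) else Real.log (p c) from
          funext fun t => by simp only [hg]; split <;> rfl]
        exact sum_ite_fin m n _ _
      rw [hlf, hlg] at hlog
      simp only [hs]
      linarith
    -- monotonicity of s : from k = 1 passivity
    have smono : ∀ i j : Fin d, i ≤ j → s i ≤ s j := by
      intro i j hij
      have h1 := P 1 le_rfl (fun _ => i) (fun _ => j)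
        (by simp; exact hε.monotone hij)
      simp at h1
      simp only [hs]
      have := Real.log_le_log (hp j) h1
      linarith
    by_cases hd2 : 2 ≤ d
    · -- main case
      set i0 : Fin d := ⟨0, by omega⟩ with hi0
      set i1 : Fin d := ⟨1, by omega⟩ with hi1
      have hAe : ε i0 < ε i1 := hε (by simp [hi0, hi1, Fin.lt_def])
      set A : ℝ := ε i1 - ε i0 with hA
      set S : ℝ := s i1 - s i0 with hS
      have hApos : 0 < A := by simp only [hA]; linarith
      have hSpos : 0 ≤ S := by
        have := smono i0 i1 (le_of_lt (by simp [hi0, hi1, Fin.lt_def]))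
        simp only [hS]; linarith
      set β : ℝ := S / A with hβ
      have hβ0 : 0 ≤ β := div_nonneg hSpos hApos.le
      have hsi : ∀ i : Fin d, s i = s i0 + β * (ε i - ε i0) := by
        intro i
        rcases eq_or_ne i i0 with h|h
        · subst h; simp
        · have hipos : i0 < i := by
            have hne : (i : ℕ) ≠ 0 := fun hh => h (Fin.ext (by simp [hi0, hh]))
            rw [Fin.lt_def]
            simp only [hi0]
            omega
          have hBe : ε i0 < ε i := hε hipos
          set B : ℝ := ε i - ε i0 with hB
          set T : ℝ := s i - s i0 with hT
          have hBpos : 0 < B := by simp only [hB]; linarith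
          have hTpos : 0 ≤ T := by
            have := smono i0 i hipos.le; simp only [hT]; linarith
          have h1 : T * A ≤ S * B := by
            apply ratio_aux hApos hBpos hSpos
            intro m n hk hle
            have := key i0 i i1 i0 m n hk (by simp only [hA, hB] at hle ⊢; linarith)
            simp only [hS, hT]; linarith
          have h2 : S * B ≤ T * A := by
            apply ratio_aux hBpos hApos hTpos
            intro m n hk hle
            have := key i0 i1 i i0 m n hk (by simp only [hA, hB] at hle ⊢; linarith)
            simp only [hS, hT]; linarith
          have heq : T * A = S * B := le_antisymm h1 h2
          have h5 : (s i - s i0) * A = S * (ε i - ε i0) := by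
            rw [← hB, ← hT]; exact heq
          have h6 : s i - s i0 = β * (ε i - ε i0) := by
            rw [hβ, div_mul_eq_mul_div, eq_div_iff hApos.ne']
            linarith [h5]
          rw [← hB] at h6
          linarith [h6]
      -- now express p i
      set C : ℝ := Real.exp (-(s i0) + β * ε i0) with hC
      have hpi : ∀ i, p i = C * Real.exp (-β * ε i) := by
        intro i
        have h1 : p i = Real.exp (-(s i)) := by
          simp only [hs, neg_neg]
          rw [Real.exp_log (hp i)]
        rw [h1, hsi i, hC, ← Real.exp_add]
        congr 1
        ring
      set Z : ℝ := ∑ j, Real.exp (-β * ε j) with hZ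
      have hZpos : 0 < Z := Finset.sum_pos (fun j _ => Real.exp_pos _)
        (Finset.univ_nonempty_iff.mpr ⟨⟨0, hd⟩⟩)
      have hCZ : C * Z = 1 := by
        rw [hZ, Finset.mul_sum, ← hp1]
        exact Finset.sum_congr rfl fun i _ => (hpi i).symm
      refine ⟨β, hβ0, fun i => ?_⟩
      rw [hpi i, ← hZ, eq_div_iff hZpos.ne']
      linear_combination Real.exp (-β * ε i) * hCZ
    · -- d = 1
      have hd1 : d = 1 := by omega
      subst hd1
      refine ⟨0, le_rfl, fun i => ?_⟩
      have hi : i = 0 := Subsingleton.elim i 0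
      subst hi
      rw [Fin.sum_univ_one] at hp1 ⊢
      simp [hp1]
  · -- reverse direction
    rintro ⟨β, hβ0, hβ⟩ k hk f g hfg
    set Z : ℝ := ∑ j, Real.exp (-β * ε j) with hZ
    have hZpos : 0 < Z := Finset.sum_pos (fun j _ => Real.exp_pos _)
      (Finset.univ_nonempty_iff.mpr ⟨⟨0, hd⟩⟩)
    have hform : ∀ h : Fin k → Fin d,
        ∏ t, p (h t) = Real.exp (-β * ∑ t, ε (h t)) / Z ^ k := by
      intro h
      simp only [hβ, ← hZ]
      rw [Finset.prod_div_distrib, Finset.prod_const, Finset.card_univ, Fintype.card_fin,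
        ← Real.exp_sum]
      congr 1
      rw [Finset.mul_sum]
    rw [hform f, hform g]
    have hZk : (0:ℝ) < Z ^ k := pow_pos hZpos k
    have hexp : Real.exp (-β * ∑ t, ε (g t)) ≤ Real.exp (-β * ∑ t, ε (f t)) := by
      apply Real.exp_le_exp.2
      nlinarith [mul_le_mul_of_nonneg_left hfg hβ0]
    exact div_le_div_of_nonneg_right hexp hZk.le
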